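/- If the generalized cylinder conjecture is true for (v+1, r+1, q), then it is true for (v, r, q). Concretely: if S is a q^r-divisible spanning set of q^{r+1} points in PG(v-1,q) which is not an (r+1)-cylinder, then the cone S' = {A(P, S) : S ∈ S} over S with apex a new point P in PG(v,q) is a q^{r+1}-divisible spanning set of q^{r+2} points which is not an (r+2)-cylinder. -/

import Mathlib

open Module
open scoped Classical

/-- `S` is the point set of a cylinder inside the subspace `T` of `PG(v'-1,q)`:
there are an `rr`-dimensional subspace `Fs` and `q` subspaces `L i` of dimension
`rr + 1`, all containing `Fs`, such that `S` consists exactly of the points of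
the affine spaces `L i \ Fs`.  (For an `(r+1)`-cylinder take `rr = r`.) -/
def IsCylinderIn (q rr v' : ℕ) {F : Type} [Field F]
    (T : Submodule F (Fin v' → F)) (S : Set (Submodule F (Fin v' → F))) : Prop :=
  ∃ (Fs : Submodule F (Fin v' → F)) (L : Fin q → Submodule F (Fin v' → F)),
    Module.finrank F Fs = rr ∧ Fs ≤ T ∧
    (∀ i, Module.finrank F (L i) = rr + 1 ∧ Fs ≤ L i ∧ L i ≤ T) ∧
    ∀ P : Submodule F (Fin v' → F), Module.finrank F P = 1 →
      (P ∈ S ↔ ∃ i, P ≤ L i ∧ ¬ P ≤ Fs)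

namespace Stmt8Aux

section General

variable {F : Type} [Field F] {V : Type} [AddCommGroup V] [Module F V] [FiniteDimensional F V]

lemma span_eq_of_mem {P : Submodule F V} (hP : finrank F P = 1) {x : V}
    (hx : x ∈ P) (h0 : x ≠ 0) : Submodule.span F {x} = P :=
  Submodule.eq_of_le_of_finrank_le ((Submodule.span_singleton_le_iff_mem x P).2 hx)
    (by rw [hP, finrank_span_singleton h0])

lemma pt_exists_gen {P : Submodule F V} (hP : finrank F P = 1) :
    ∃ x, x ∈ P ∧ x ≠ 0 ∧ Submodule.span F {x} = P := by
  have hb : P ≠ ⊥ := by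
    intro h
    rw [h, finrank_bot] at hP
    omega
  obtain ⟨x, hx, h0⟩ := Submodule.exists_mem_ne_zero_of_ne_bot hb
  exact ⟨x, hx, h0, span_eq_of_mem hP hx h0⟩

lemma pt_le_pt {P Q : Submodule F V} (hP : finrank F P = 1) (hQ : finrank F Q = 1)
    (h : P ≤ Q) : P = Q :=
  Submodule.eq_of_le_of_finrank_le h (by rw [hP, hQ])

lemma pt_inf_eq_bot {P U : Submodule F V} (hP : finrank F P = 1) (h : ¬ P ≤ U) :
    P ⊓ U = ⊥ := by
  rw [eq_bot_iff]
  intro x hx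
  obtain ⟨hxP, hxU⟩ := Submodule.mem_inf.1 hx
  rw [Submodule.mem_bot]
  by_contra h0
  exact h ((span_eq_of_mem hP hxP h0) ▸ (Submodule.span_singleton_le_iff_mem x U).2 hxU)

lemma finrank_sup_span {U : Submodule F V} {x : V} (hx : x ∉ U) :
    finrank F ↥(U ⊔ Submodule.span F {x}) = finrank F U + 1 := by
  have h0 : x ≠ 0 := fun h => hx (h ▸ U.zero_mem)
  have hinf : U ⊓ Submodule.span F {x} = ⊥ := by
    rw [eq_bot_iff]
    intro y hy
    obtain ⟨hyU, hys⟩ := Submodule.mem_inf.1 hy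
    obtain ⟨c, rfl⟩ := Submodule.mem_span_singleton.1 hys
    rcases eq_or_ne c 0 with rfl | hc
    · simp
    · exact absurd (by simpa [smul_smul, inv_mul_cancel₀ hc] using U.smul_mem c⁻¹ hyU) hx
  have hs := Submodule.finrank_sup_add_finrank_inf_eq U (Submodule.span F {x})
  rw [hinf, finrank_bot, finrank_span_singleton h0] at hs
  omega

lemma two_pt_sup {P Q : Submodule F V} (hP : finrank F P = 1) (hQ : finrank F Q = 1)
    (hne : P ≠ Q) : finrank F ↥(P ⊔ Q) = 2 := by
  have hnle : ¬ P ≤ Q := fun h => hne (pt_le_pt hP hQ h)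
  have hinf := pt_inf_eq_bot hP hnle
  have hs := Submodule.finrank_sup_add_finrank_inf_eq P Q
  rw [hinf, finrank_bot, hP, hQ] at hs
  omega

end General

section Ambient

variable {F : Type} [Field F] {v : ℕ}

lemma frW : finrank F (Fin (v + 1) → F) = v + 1 := by
  simp [Module.finrank_pi]

lemma hyper_sup {A B : Submodule F (Fin (v + 1) → F)} (hA : finrank F A = v) (h : ¬ B ≤ A) :
    A ⊔ B = ⊤ := by
  have hlt : A < A ⊔ B := lt_of_le_of_ne le_sup_left (fun he => h (le_sup_right.trans he.ge))
  have h1 : finrank F A < finrank F ↥(A ⊔ B) := Submodule.finrank_lt_finrank_of_lt hlt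
  have h2 : finrank F ↥(A ⊔ B) ≤ finrank F (Fin (v + 1) → F) := Submodule.finrank_le _
  have h3 : finrank F (Fin (v + 1) → F) = v + 1 := frW
  exact Submodule.eq_top_of_finrank_eq (by omega)

lemma hyper_inf {A B : Submodule F (Fin (v + 1) → F)} (hA : finrank F A = v) (h : ¬ B ≤ A) :
    finrank F ↥(B ⊓ A) + 1 = finrank F B := by
  have hs := Submodule.finrank_sup_add_finrank_inf_eq A B
  rw [hyper_sup hA h, hA, finrank_top, frW, inf_comm A B] at hs
  omega

end Ambient

section Counting

variable {F : Type} [Field F] [Fintype F] {v : ℕ}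

noncomputable instance : Finite (Submodule F (Fin (v + 1) → F)) :=
  Finite.of_injective (fun U => (U : Set (Fin (v + 1) → F))) SetLike.coe_injective

lemma ncard_coe (U : Submodule F (Fin (v + 1) → F)) :
    (U : Set (Fin (v + 1) → F)).ncard = Fintype.card F ^ finrank F U := by
  rw [← Nat.card_coe_set_eq]
  have h1 : Nat.card ↥(U : Set (Fin (v + 1) → F)) = Nat.card ↥U := rfl
  rw [h1, Nat.card_eq_fintype_card]
  exact Module.card_eq_pow_finrank (K := F)

lemma ncard_biUnion_const {α β : Type*} {s : Set α} (hs : s.Finite) (t : α → Set β) (k : ℕ) :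
    (∀ a ∈ s, (t a).Finite) → (∀ a ∈ s, ∀ b ∈ s, a ≠ b → Disjoint (t a) (t b)) →
    (∀ a ∈ s, (t a).ncard = k) → (⋃ a ∈ s, t a).ncard = s.ncard * k := by
  refine Set.Finite.induction_on
    (motive := fun s _ => (∀ a ∈ s, (t a).Finite) → (∀ a ∈ s, ∀ b ∈ s, a ≠ b → Disjoint (t a) (t b)) →
      (∀ a ∈ s, (t a).ncard = k) → (⋃ a ∈ s, t a).ncard = s.ncard * k) s hs
    (by intro _ _ _; simp) ?_
  intro a s ha hsf ih hfin hdisj hk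
  have hd : Disjoint (t a) (⋃ b ∈ s, t b) := by
    rw [Set.disjoint_left]
    rintro x hx hx'
    obtain ⟨b, hb, hxb⟩ := Set.mem_iUnion₂.1 hx'
    exact (Set.disjoint_left.1 (hdisj a (Set.mem_insert a s) b (Set.mem_insert_of_mem a hb)
      (fun h => ha (h ▸ hb)))) hx hxb
  rw [Set.biUnion_insert, Set.ncard_union_eq hd (hfin a (Set.mem_insert a s))
    (Set.Finite.biUnion hsf (fun b hb => hfin b (Set.mem_insert_of_mem a hb)))]
  rw [ih (fun b hb => hfin b (Set.mem_insert_of_mem a hb))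
    (fun b hb c hc => hdisj b (Set.mem_insert_of_mem a hb) c (Set.mem_insert_of_mem a hc))
    (fun b hb => hk b (Set.mem_insert_of_mem a hb))]
  rw [hk a (Set.mem_insert a s), Set.ncard_insert_of_notMem ha hsf]
  ring

lemma ncard_pts (U U' : Submodule F (Fin (v + 1) → F)) (hle : U' ≤ U)
    (hr : finrank F U = finrank F U' + 1) :
    {P : Submodule F (Fin (v + 1) → F) | finrank F P = 1 ∧ P ≤ U ∧ ¬ P ≤ U'}.ncard
      = Fintype.card F ^ finrank F U' := by
  have hq : 2 ≤ Fintype.card F := Fintype.one_lt_card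
  set PTS := {P : Submodule F (Fin (v + 1) → F) | finrank F P = 1 ∧ P ≤ U ∧ ¬ P ≤ U'} with hPTS
  have hun : ((U : Set (Fin (v + 1) → F)) \ (U' : Set (Fin (v + 1) → F)))
      = ⋃ P ∈ PTS, ((P : Set (Fin (v + 1) → F)) \ {0}) := by
    ext x
    simp only [Set.mem_diff, Set.mem_iUnion, SetLike.mem_coe, Set.mem_singleton_iff]
    constructor
    · rintro ⟨hxU, hxU'⟩
      have hx0 : x ≠ 0 := fun h => hxU' (h ▸ U'.zero_mem)
      exact ⟨Submodule.span F {x}, ⟨finrank_span_singleton hx0,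
        (Submodule.span_singleton_le_iff_mem _ _).2 hxU,
        fun h => hxU' (h (Submodule.mem_span_singleton_self x))⟩,
        Submodule.mem_span_singleton_self x, hx0⟩
    · rintro ⟨P, ⟨h1, h2, h3⟩, hxP, hx0⟩
      exact ⟨h2 hxP, fun hxU' =>
        h3 ((span_eq_of_mem h1 hxP hx0) ▸ (Submodule.span_singleton_le_iff_mem _ _).2 hxU')⟩
  have hdisj : ∀ P ∈ PTS, ∀ Q ∈ PTS, P ≠ Q →
      Disjoint ((P : Set (Fin (v + 1) → F)) \ {0}) ((Q : Set (Fin (v + 1) → F)) \ {0}) := by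
    intro P hP Q hQ hne
    rw [Set.disjoint_left]
    rintro x ⟨hxP, hx0⟩ ⟨hxQ, -⟩
    have hx0' : x ≠ 0 := by simpa using hx0
    exact hne ((span_eq_of_mem hP.1 hxP hx0').symm.trans (span_eq_of_mem hQ.1 hxQ hx0'))
  have hcell : ∀ P ∈ PTS, ((P : Set (Fin (v + 1) → F)) \ {0}).ncard = Fintype.card F - 1 := by
    intro P hP
    have h1 : (P : Set (Fin (v + 1) → F)).ncard = Fintype.card F := by
      rw [ncard_coe, hP.1, pow_one]
    rw [Set.ncard_diff_singleton_of_mem (P.zero_mem), h1]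
  have hmain := ncard_biUnion_const (Set.toFinite PTS)
    (fun P => (P : Set (Fin (v + 1) → F)) \ {0}) (Fintype.card F - 1)
    (fun a _ => Set.toFinite _) hdisj hcell
  rw [← hun] at hmain
  have hunc : ((U : Set (Fin (v + 1) → F)) \ (U' : Set (Fin (v + 1) → F))).ncard
      = Fintype.card F ^ finrank F U' * Fintype.card F - Fintype.card F ^ finrank F U' := by
    rw [Set.ncard_diff (SetLike.coe_subset_coe.2 hle) (Set.toFinite _), ncard_coe, ncard_coe,
      hr, pow_succ]
  rw [hunc] at hmain
  have hfac : Fintype.card F ^ finrank F U' * Fintype.card F - Fintype.card F ^ finrank F U'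
      = Fintype.card F ^ finrank F U' * (Fintype.card F - 1) := by
    rw [Nat.mul_sub, mul_one]
  rw [hfac] at hmain
  exact (Nat.eq_of_mul_eq_mul_right (by omega) hmain.symm)

end Counting

end Stmt8Aux

open Stmt8Aux

/-- if `S` is a `q^r`-divisible spanning set of `q^(r+1)` points in
a hyperplane `V0` of `PG(v,q)` which is not an `(r+1)`-cylinder, then the cone
`S' = {A(P, P0) : P ∈ S}` over `S` with apex a point `P0 ∉ V0` is a
`q^(r+1)`-divisible spanning set of `q^(r+2)` points of `PG(v,q)` which is not an
`(r+2)`-cylinder.  (Hence truth of the generalized cylinder conjecture for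
`(v+1, r+1, q)` implies it for `(v, r, q)`.) -/
theorem stmt8 (q v r : ℕ) (F : Type) [Field F] [Fintype F] (hF : Fintype.card F = q)
    (V0 : Submodule F (Fin (v + 1) → F)) (hV0 : finrank F V0 = v)
    (P0 : Submodule F (Fin (v + 1) → F)) (hP0 : finrank F P0 = 1) (hP0V0 : ¬ P0 ≤ V0)
    (S : Set (Submodule F (Fin (v + 1) → F)))
    (hpts : ∀ P ∈ S, finrank F P = 1 ∧ P ≤ V0)
    (hcard : S.ncard = q ^ (r + 1))
    (hdiv : ∀ K : Submodule F (Fin (v + 1) → F), K ≤ V0 → finrank F K = v - 1 →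
      q ^ r ∣ (S ∩ {P | P ≤ K}).ncard)
    (hspan : sSup S = V0)
    (hnotcyl : ¬ IsCylinderIn q r (v + 1) V0 S) :
    ({Q : Submodule F (Fin (v + 1) → F) |
        finrank F Q = 1 ∧ Q ≠ P0 ∧ ∃ P ∈ S, Q ≤ P ⊔ P0}.ncard = q ^ (r + 2)) ∧
    (∀ H : Submodule F (Fin (v + 1) → F), finrank F H = v →
      q ^ (r + 1) ∣ ({Q : Submodule F (Fin (v + 1) → F) |
        finrank F Q = 1 ∧ Q ≠ P0 ∧ ∃ P ∈ S, Q ≤ P ⊔ P0} ∩ {Q | Q ≤ H}).ncard) ∧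
    sSup {Q : Submodule F (Fin (v + 1) → F) |
        finrank F Q = 1 ∧ Q ≠ P0 ∧ ∃ P ∈ S, Q ≤ P ⊔ P0} = (⊤ : Submodule F (Fin (v + 1) → F)) ∧
    ¬ IsCylinderIn q (r + 1) (v + 1) ⊤
        {Q : Submodule F (Fin (v + 1) → F) |
          finrank F Q = 1 ∧ Q ≠ P0 ∧ ∃ P ∈ S, Q ≤ P ⊔ P0} := by
  classical
  have hq2 : 2 ≤ q := by rw [← hF]; exact Fintype.one_lt_card
  set S' := {Q : Submodule F (Fin (v + 1) → F) |
      finrank F Q = 1 ∧ Q ≠ P0 ∧ ∃ P ∈ S, Q ≤ P ⊔ P0} with hS'def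
  have hSfin : S.Finite := Set.toFinite S
  have hSne : S.Nonempty := by
    refine Set.nonempty_of_ncard_ne_zero ?_
    rw [hcard]
    have : 0 < q ^ (r + 1) := pow_pos (by omega) _
    omega
  have hPne : ∀ P ∈ S, P ≠ P0 := fun P hP h => hP0V0 (h ▸ (hpts P hP).2)
  have hline2 : ∀ P ∈ S, finrank F ↥(P ⊔ P0) = 2 :=
    fun P hP => two_pt_sup (hpts P hP).1 hP0 (hPne P hP)
  set A : Submodule F (Fin (v + 1) → F) → Set (Submodule F (Fin (v + 1) → F)) :=
    fun P => {Q | finrank F Q = 1 ∧ Q ≠ P0 ∧ Q ≤ P ⊔ P0} with hAdef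
  have hAmem : ∀ P Q, Q ∈ A P ↔ (finrank F Q = 1 ∧ Q ≠ P0 ∧ Q ≤ P ⊔ P0) := by
    intro P Q
    simp only [hAdef, Set.mem_setOf_eq]
  have hAcard : ∀ P ∈ S, (A P).ncard = q := by
    intro P hP
    have he : A P = {Q : Submodule F (Fin (v + 1) → F) |
        finrank F Q = 1 ∧ Q ≤ P ⊔ P0 ∧ ¬ Q ≤ P0} := by
      ext Q
      rw [hAmem]
      simp only [Set.mem_setOf_eq]
      constructor
      · rintro ⟨h1, h2, h3⟩; exact ⟨h1, h3, fun h => h2 (pt_le_pt h1 hP0 h)⟩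
      · rintro ⟨h1, h2, h3⟩; exact ⟨h1, fun h => h3 (le_of_eq h), h2⟩
    rw [he, ncard_pts (P ⊔ P0) P0 le_sup_right (by rw [hline2 P hP, hP0]), hP0, pow_one, hF]
  have hlinf : ∀ P ∈ S, ∀ P' ∈ S, P ≠ P' → (P ⊔ P0) ⊓ (P' ⊔ P0) ≤ P0 := by
    intro P hP P' hP' hne x hx
    obtain ⟨hx1, hx2⟩ := Submodule.mem_inf.1 hx
    obtain ⟨a, ha, b, hb, hab⟩ := Submodule.mem_sup.1 hx1
    obtain ⟨a', ha', b', hb', hab'⟩ := Submodule.mem_sup.1 hx2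
    have hdiff : a - a' = b' - b :=
      sub_eq_sub_iff_add_eq_add.2 ((hab.trans hab'.symm).trans (add_comm a' b'))
    have hmV : a - a' ∈ V0 := V0.sub_mem ((hpts P hP).2 ha) ((hpts P' hP').2 ha')
    have hmP0 : a - a' ∈ P0 := by rw [hdiff]; exact P0.sub_mem hb' hb
    have haa : a = a' := by
      have hm : a - a' ∈ P0 ⊓ V0 := Submodule.mem_inf.2 ⟨hmP0, hmV⟩
      rw [pt_inf_eq_bot hP0 hP0V0, Submodule.mem_bot] at hm
      exact sub_eq_zero.1 hm
    have ha0 : a = 0 := by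
      by_contra h0
      refine hne (pt_le_pt (hpts P hP).1 (hpts P' hP').1 ?_)
      rw [← span_eq_of_mem (hpts P hP).1 ha h0]
      exact (Submodule.span_singleton_le_iff_mem _ _).2 (haa ▸ ha')
    rw [← hab, ha0, zero_add]
    exact hb
  have hAdisj : ∀ P ∈ S, ∀ P' ∈ S, P ≠ P' → Disjoint (A P) (A P') := by
    intro P hP P' hP' hne
    rw [Set.disjoint_left]
    intro Q hQ hQ'
    rw [hAmem] at hQ hQ'
    exact hQ.2.1 (pt_le_pt hQ.1 hP0 ((le_inf hQ.2.2 hQ'.2.2).trans (hlinf P hP P' hP' hne)))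
  have hS'union : S' = ⋃ P ∈ S, A P := by
    ext Q
    rw [hS'def]
    simp only [Set.mem_setOf_eq, Set.mem_iUnion, hAmem]
    constructor
    · rintro ⟨h1, h2, P, hP, h3⟩; exact ⟨P, hP, h1, h2, h3⟩
    · rintro ⟨P, hP, h1, h2, h3⟩; exact ⟨h1, h2, P, hP, h3⟩
  have hS'card : S'.ncard = q ^ (r + 2) := by
    rw [hS'union, ncard_biUnion_const hSfin A q (fun a _ => Set.toFinite _) hAdisj hAcard, hcard]
    ring
  have hSsubS' : ∀ P ∈ S, P ∈ S' := by
    intro P hP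
    rw [hS'def]
    exact ⟨(hpts P hP).1, hPne P hP, P, hP, le_sup_left⟩
  have hlineV0 : ∀ P ∈ S, (P ⊔ P0) ⊓ V0 = P := by
    intro P hP
    have hnle : ¬ (P ⊔ P0) ≤ V0 := fun h => hP0V0 (le_sup_right.trans h)
    have hfr := hyper_inf hV0 hnle
    rw [hline2 P hP] at hfr
    refine (Submodule.eq_of_le_of_finrank_le (le_inf le_sup_left (hpts P hP).2) ?_).symm
    rw [(hpts P hP).1]
    omega
  have hS'V0 : ∀ Q, Q ∈ S' → Q ≤ V0 → Q ∈ S := by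
    intro Q hQ hQV
    rw [hS'def] at hQ
    obtain ⟨h1, h2, P, hP, h3⟩ := hQ
    have hle : Q ≤ P := by
      rw [← hlineV0 P hP]
      exact le_inf h3 hQV
    rwa [pt_le_pt h1 (hpts P hP).1 hle]
  have hspan' : sSup S' = ⊤ := by
    obtain ⟨P, hP⟩ := hSne
    obtain ⟨p, hp, hp0, hps⟩ := pt_exists_gen (hpts P hP).1
    obtain ⟨z, hz, hz0, hzs⟩ := pt_exists_gen hP0
    have hzV : z ∉ V0 := fun h => hP0V0 (hzs ▸ (Submodule.span_singleton_le_iff_mem _ _).2 h)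
    have hpV : p ∈ V0 := (hpts P hP).2 hp
    have hpz0 : p + z ≠ 0 := by
      intro h
      have hzp : z = -p := eq_neg_of_add_eq_zero_right h
      exact hzV (hzp ▸ V0.neg_mem hpV)
    have hQ1 : finrank F (Submodule.span F {p + z}) = 1 := finrank_span_singleton hpz0
    have hQS' : Submodule.span F {p + z} ∈ S' := by
      rw [hS'def]
      refine ⟨hQ1, ?_, P, hP, (Submodule.span_singleton_le_iff_mem _ _).2
        (Submodule.add_mem_sup hp hz)⟩
      intro h
      have h1 : p + z ∈ P0 := h ▸ Submodule.mem_span_singleton_self _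
      have h2 : p ∈ P0 := by
        have := P0.sub_mem h1 hz
        simpa using this
      have hm : p ∈ P0 ⊓ V0 := Submodule.mem_inf.2 ⟨h2, hpV⟩
      rw [pt_inf_eq_bot hP0 hP0V0, Submodule.mem_bot] at hm
      exact hp0 hm
    have hQnV : ¬ Submodule.span F {p + z} ≤ V0 := by
      intro h
      have h1 : p + z ∈ V0 := h (Submodule.mem_span_singleton_self _)
      exact hzV (by simpa using V0.sub_mem h1 hpV)
    have h1 : V0 ≤ sSup S' := by
      rw [← hspan]
      exact sSup_le_sSup (fun P'' hP'' => hSsubS' P'' hP'')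
    have h2 : Submodule.span F {p + z} ≤ sSup S' := le_sSup hQS'
    have h3 : V0 ⊔ Submodule.span F {p + z} = ⊤ := hyper_sup hV0 hQnV
    refine le_antisymm le_top ?_
    rw [← h3]
    exact sup_le h1 h2
  have hdiv' : ∀ H : Submodule F (Fin (v + 1) → F), finrank F H = v →
      q ^ (r + 1) ∣ (S' ∩ {Q | Q ≤ H}).ncard := by
    intro H hH
    by_cases hPH : P0 ≤ H
    · have hHV : ¬ H ≤ V0 := fun h => hP0V0 (hPH.trans h)
      have hK := hyper_inf hV0 hHV
      rw [hH] at hK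
      have hUeq : S' ∩ {Q | Q ≤ H} = ⋃ P ∈ (S ∩ {P | P ≤ H}), A P := by
        ext Q
        simp only [hS'def, Set.mem_inter_iff, Set.mem_setOf_eq, Set.mem_iUnion, hAmem]
        constructor
        · rintro ⟨⟨h1, h2, P, hP, h3⟩, hQH⟩
          refine ⟨P, ⟨hP, ?_⟩, h1, h2, h3⟩
          have he : Q ⊔ P0 = P ⊔ P0 := by
            refine Submodule.eq_of_le_of_finrank_le (sup_le h3 le_sup_right) ?_
            rw [two_pt_sup h1 hP0 h2, hline2 P hP]
          have h4 : Q ⊔ P0 ≤ H := sup_le hQH hPH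
          rw [he] at h4
          exact le_sup_left.trans h4
        · rintro ⟨P, ⟨hP, hPH'⟩, h1, h2, h3⟩
          exact ⟨⟨h1, h2, P, hP, h3⟩, h3.trans (sup_le hPH' hPH)⟩
      rw [hUeq, ncard_biUnion_const (Set.toFinite _) A q (fun a _ => Set.toFinite _)
        (fun a ha b hb => hAdisj a ha.1 b hb.1) (fun a ha => hAcard a ha.1)]
      have hTK : S ∩ {P | P ≤ H} = S ∩ {P | P ≤ H ⊓ V0} := by
        ext P
        simp only [Set.mem_inter_iff, Set.mem_setOf_eq]
        exact ⟨fun h => ⟨h.1, le_inf h.2 (hpts P h.1).2⟩,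
          fun h => ⟨h.1, h.2.trans inf_le_left⟩⟩
      obtain ⟨m, hm⟩ := hdiv (H ⊓ V0) inf_le_right (by omega)
      rw [hTK, hm]
      exact ⟨m, by ring⟩
    · have hinj : Set.InjOn (fun P => (P ⊔ P0) ⊓ H) S := by
        intro P hP P' hP' he
        by_contra hne
        have he' : (P ⊔ P0) ⊓ H = (P' ⊔ P0) ⊓ H := he
        have hnle : ¬ (P ⊔ P0) ≤ H := fun h => hPH (le_sup_right.trans h)
        have hfr := hyper_inf hH hnle
        rw [hline2 P hP] at hfr
        have h1 : (P ⊔ P0) ⊓ H ≤ P0 := by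
          refine le_trans (le_inf inf_le_left ?_) (hlinf P hP P' hP' hne)
          rw [he']
          exact inf_le_left
        refine hPH ?_
        rw [← pt_le_pt (by omega : finrank F ↥((P ⊔ P0) ⊓ H) = 1) hP0 h1]
        exact inf_le_right
      have himg : S' ∩ {Q | Q ≤ H} = (fun P => (P ⊔ P0) ⊓ H) '' S := by
        ext Q
        simp only [hS'def, Set.mem_inter_iff, Set.mem_setOf_eq, Set.mem_image]
        constructor
        · rintro ⟨⟨h1, h2, P, hP, h3⟩, hQH⟩
          refine ⟨P, hP, ?_⟩
          have hnle : ¬ (P ⊔ P0) ≤ H := fun h => hPH (le_sup_right.trans h)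
          have hfr := hyper_inf hH hnle
          rw [hline2 P hP] at hfr
          exact (pt_le_pt h1 (by omega) (le_inf h3 hQH)).symm
        · rintro ⟨P, hP, rfl⟩
          have hnle : ¬ (P ⊔ P0) ≤ H := fun h => hPH (le_sup_right.trans h)
          have hfr := hyper_inf hH hnle
          rw [hline2 P hP] at hfr
          exact ⟨⟨by omega, fun h => hPH (by rw [← h]; exact inf_le_right), P, hP,
            inf_le_left⟩, inf_le_right⟩
      rw [himg, Set.ncard_image_of_injOn hinj, hcard]
  have hnotcyl' : ¬ IsCylinderIn q (r + 1) (v + 1) ⊤ S' := by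
    rintro ⟨Fs, L, hFsr, -, hL, hchar⟩
    by_cases hFsV : Fs ≤ V0
    · obtain ⟨P, hP⟩ := hSne
      obtain ⟨i0, hPL, hPFs⟩ := (hchar P (hpts P hP).1).1 (hSsubS' P hP)
      have hLV : L i0 ≤ V0 := by
        by_contra hnle
        have h1 := hyper_inf hV0 hnle
        rw [(hL i0).1] at h1
        have h2 : Fs = L i0 ⊓ V0 := Submodule.eq_of_le_of_finrank_le
          (le_inf (hL i0).2.1 hFsV) (by rw [hFsr]; omega)
        refine hPFs ?_
        rw [h2]
        exact le_inf hPL (hpts P hP).2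
      set X := {R : Submodule F (Fin (v + 1) → F) | finrank F R = 1 ∧ R ≤ L i0 ∧ ¬ R ≤ Fs}
        with hXdef
      have hXS : X ⊆ S := by
        rintro R ⟨h1, h2, h3⟩
        exact hS'V0 R ((hchar R h1).2 ⟨i0, h2, h3⟩) (h2.trans hLV)
      have hXcard : X.ncard = q ^ (r + 1) := by
        rw [hXdef, ncard_pts (L i0) Fs (hL i0).2.1 (by rw [(hL i0).1, hFsr]), hFsr, hF]
      have hSX : S = X :=
        (Set.eq_of_subset_of_ncard_le hXS (by rw [hXcard, hcard]) (Set.toFinite S)).symm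
      have hLV0 : L i0 = V0 := by
        refine le_antisymm hLV ?_
        rw [← hspan]
        refine sSup_le (fun P' hP' => ?_)
        have hx : P' ∈ X := by rw [← hSX]; exact hP'
        exact hx.2.1
      have hfrV0 : finrank F V0 = r + 2 := by rw [← hLV0, (hL i0).1]
      have hFsne : Fs ≠ ⊥ := by
        intro h
        rw [h, finrank_bot] at hFsr
        omega
      obtain ⟨x, hxFs, hx0⟩ := Submodule.exists_mem_ne_zero_of_ne_bot hFsne
      obtain ⟨C, hC⟩ := Submodule.exists_isCompl (Submodule.span F {(⟨x, hxFs⟩ : Fs)})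
      set Fs'' : Submodule F (Fin (v + 1) → F) := C.map Fs.subtype with hFs''def
      have hFs''le : Fs'' ≤ Fs := by
        rw [hFs''def]
        rintro y ⟨c, hc, rfl⟩
        exact c.2
      have hspanmap : Submodule.span F {x}
          = (Submodule.span F {(⟨x, hxFs⟩ : Fs)}).map Fs.subtype := by
        rw [Submodule.map_span, Set.image_singleton]
        rfl
      have hsupx : Fs'' ⊔ Submodule.span F {x} = Fs := by
        rw [hFs''def, hspanmap, ← Submodule.map_sup, sup_comm, hC.sup_eq_top,
          Submodule.map_subtype_top]
      have hxFs'' : x ∉ Fs'' := by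
        rw [hFs''def]
        rintro ⟨c, hcC, hcx⟩
        have hce : c = (⟨x, hxFs⟩ : Fs) := Subtype.ext hcx
        rw [hce] at hcC
        have hm : (⟨x, hxFs⟩ : Fs) ∈ Submodule.span F {(⟨x, hxFs⟩ : Fs)} ⊓ C :=
          Submodule.mem_inf.2 ⟨Submodule.mem_span_singleton_self _, hcC⟩
        rw [hC.inf_eq_bot, Submodule.mem_bot] at hm
        exact hx0 (by simpa using congrArg Subtype.val hm)
      have hfrFs'' : finrank F Fs'' = r := by
        have h1 : finrank F ↥(Submodule.span F {(⟨x, hxFs⟩ : Fs)}) = 1 :=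
          finrank_span_singleton (by simp [hx0])
        have h2 := Submodule.finrank_add_eq_of_isCompl hC
        have h3 : finrank F Fs'' = finrank F C := by
          rw [hFs''def]
          exact Submodule.finrank_map_subtype_eq Fs C
        rw [h1, hFsr] at h2
        omega
      have hFslt : Fs < V0 := lt_of_le_of_ne hFsV (fun h => by rw [h, hfrV0] at hFsr; omega)
      obtain ⟨y, hyV0, hyFs⟩ := SetLike.exists_of_lt hFslt
      have hFsy : Fs ⊔ Submodule.span F {y} = V0 := by
        refine Submodule.eq_of_le_of_finrank_le
          (sup_le hFsV ((Submodule.span_singleton_le_iff_mem _ _).2 hyV0)) ?_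
        rw [finrank_sup_span hyFs, hFsr, hfrV0]
      set e : Fin q ≃ F := (Fintype.equivFinOfCardEq hF).symm with hedef
      apply hnotcyl
      refine ⟨Fs'', fun i => Fs'' ⊔ Submodule.span F {y + (e i) • x}, hfrFs'',
        hFs''le.trans hFsV, fun i => ⟨?_, le_sup_left, ?_⟩, ?_⟩
      · have hnot : y + (e i) • x ∉ Fs'' := by
          intro hmem
          have h1 : y + (e i) • x ∈ Fs := hFs''le hmem
          exact hyFs (by simpa using Fs.sub_mem h1 (Fs.smul_mem (e i) hxFs))
        rw [finrank_sup_span hnot, hfrFs'']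
      · exact sup_le (hFs''le.trans hFsV) ((Submodule.span_singleton_le_iff_mem _ _).2
          (V0.add_mem hyV0 (V0.smul_mem _ (hFsV hxFs))))
      · intro P1 hP1
        have hSform : P1 ∈ S ↔ (P1 ≤ V0 ∧ ¬ P1 ≤ Fs) := by
          rw [hSX, hXdef]
          simp only [Set.mem_setOf_eq, hLV0]
          constructor
          · rintro ⟨-, h2, h3⟩; exact ⟨h2, h3⟩
          · rintro ⟨h2, h3⟩; exact ⟨hP1, h2, h3⟩
        rw [hSform]
        constructor
        · rintro ⟨hPV, hPFs1⟩
          obtain ⟨p, hpP, hp0, hps⟩ := pt_exists_gen hP1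
          have hpV : p ∈ V0 := hPV hpP
          rw [← hFsy] at hpV
          obtain ⟨g, hg, w, hw, hgw⟩ := Submodule.mem_sup.1 hpV
          obtain ⟨b, rfl⟩ := Submodule.mem_span_singleton.1 hw
          have hgFs : g ∈ Fs := hg
          rw [← hsupx] at hg
          obtain ⟨f, hf, u, hu, hfu⟩ := Submodule.mem_sup.1 hg
          obtain ⟨a, rfl⟩ := Submodule.mem_span_singleton.1 hu
          have hb : b ≠ 0 := by
            rintro rfl
            apply hPFs1
            rw [← hps]
            refine (Submodule.span_singleton_le_iff_mem _ _).2 ?_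
            rw [← hgw]
            simpa using hgFs
          refine ⟨e.symm (b⁻¹ * a), ?_, fun hPF'' => hPFs1 (hPF''.trans hFs''le)⟩
          rw [← hps]
          refine (Submodule.span_singleton_le_iff_mem _ _).2 ?_
          have hkey : f + b • (y + (e (e.symm (b⁻¹ * a))) • x) = p := by
            rw [e.apply_symm_apply, smul_add, smul_smul, mul_inv_cancel_left₀ hb, ← hgw, ← hfu]
            abel
          rw [← hkey]
          exact Submodule.add_mem _ (Submodule.mem_sup_left hf)
            (Submodule.smul_mem _ b (Submodule.mem_sup_right (Submodule.mem_span_singleton_self _)))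
        · rintro ⟨i, hPL'', hPFs''⟩
          obtain ⟨p, hpP, hp0, hps⟩ := pt_exists_gen hP1
          have hp : p ∈ Fs'' ⊔ Submodule.span F {y + (e i) • x} := hPL'' hpP
          obtain ⟨f, hf, w, hw, hfw⟩ := Submodule.mem_sup.1 hp
          obtain ⟨t, rfl⟩ := Submodule.mem_span_singleton.1 hw
          have ht : t ≠ 0 := by
            rintro rfl
            apply hPFs''
            rw [← hps]
            refine (Submodule.span_singleton_le_iff_mem _ _).2 ?_
            rw [← hfw]
            simpa using hf
          constructor
          · rw [← hps]
            refine (Submodule.span_singleton_le_iff_mem _ _).2 ?_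
            rw [← hfw]
            exact V0.add_mem (hFsV (hFs''le hf))
              (V0.smul_mem t (V0.add_mem hyV0 (V0.smul_mem _ (hFsV hxFs))))
          · intro hPFsx
            apply hyFs
            have hpFs : p ∈ Fs := hPFsx hpP
            have h1 : t • y ∈ Fs := by
              have h2 : p - f - (t * (e i)) • x ∈ Fs :=
                Fs.sub_mem (Fs.sub_mem hpFs (hFs''le hf)) (Fs.smul_mem _ hxFs)
              have h3 : p - f - (t * (e i)) • x = t • y := by
                rw [← hfw, smul_add, smul_smul]
                abel
              rwa [h3] at h2
            have h4 := Fs.smul_mem t⁻¹ h1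
            rwa [smul_smul, inv_mul_cancel₀ ht, one_smul] at h4
    · apply hnotcyl
      refine ⟨Fs ⊓ V0, fun i => L i ⊓ V0, ?_, inf_le_right,
        fun i => ⟨?_, inf_le_inf_right V0 (hL i).2.1, inf_le_right⟩, ?_⟩
      · have h1 := hyper_inf hV0 hFsV
        rw [hFsr] at h1
        omega
      · show finrank F ↥(L i ⊓ V0) = r + 1
        have hnle : ¬ L i ≤ V0 := fun h => hFsV ((hL i).2.1.trans h)
        have h1 := hyper_inf hV0 hnle
        rw [(hL i).1] at h1
        omega
      · intro P1 hP1
        constructor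
        · intro hPS
          obtain ⟨i, h1, h2⟩ := (hchar P1 hP1).1 (hSsubS' P1 hPS)
          exact ⟨i, le_inf h1 (hpts P1 hPS).2, fun h => h2 (h.trans inf_le_left)⟩
        · rintro ⟨i, h1, h2⟩
          have hPV : P1 ≤ V0 := h1.trans inf_le_right
          exact hS'V0 P1 ((hchar P1 hP1).2 ⟨i, h1.trans inf_le_left,
            fun h => h2 (le_inf h hPV)⟩) hPV
  exact ⟨hS'card, hdiv', hspan', hnotcyl'⟩
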